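/- arXiv:1810.01737 — 5 statements merged into one kernel-verified Lean document; each statement's English description precedes it below -/
import Mathlib

section
/- Let k be a field and n ≥ 1 an integer. Let D be a diagonal n×n matrix over k whose diagonal entries are pairwise distinct, and let J be the n×n matrix over k all of whose entries equal 1. Then the k-subalgebra of the matrix algebra M_n(k) generated by D and J is all of M_n(k). -/
/-- Let `k` be a field and `n ≥ 1`. If `D` is a diagonal `n × n` matrix over `k` with
pairwise distinct diagonal entries and `J` is the all-ones `n × n` matrix, then the
`k`-subalgebra of `M_n(k)` generated by `D` and `J` is all of `M_n(k)`. -/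
theorem stmt_0 {k : Type*} [Field k] {n : ℕ} (hn : 1 ≤ n)
    (d : Fin n → k) (hd : Function.Injective d)
    (J : Matrix (Fin n) (Fin n) k) (hJ : ∀ i j, J i j = 1) :
    Algebra.adjoin k ({Matrix.diagonal d, J} : Set (Matrix (Fin n) (Fin n) k)) = ⊤ := by
  set A := Algebra.adjoin k ({Matrix.diagonal d, J} : Set (Matrix (Fin n) (Fin n) k)) with hA
  have hD : Matrix.diagonal d ∈ A := Algebra.subset_adjoin (Set.mem_insert _ _)
  have hJA : J ∈ A := Algebra.subset_adjoin (Set.mem_insert_of_mem _ rfl)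
  -- diagonal matrix units
  have hEii : ∀ i : Fin n, Matrix.single i i (1 : k) ∈ A := by
    intro i
    set p : Polynomial k :=
      Lagrange.interpolate Finset.univ d (fun j => if j = i then 1 else 0) with hp
    have hev : ∀ j : Fin n, Polynomial.eval (d j) p = if j = i then 1 else 0 := fun j =>
      Lagrange.eval_interpolate_at_node _ (Function.Injective.injOn hd) (Finset.mem_univ j)
    have key : Polynomial.aeval (Matrix.diagonal d) p = Matrix.single i i (1 : k) := by
      have hdiag := Polynomial.aeval_algHom_apply
        (Matrix.diagonalAlgHom (n := Fin n) (α := k) k) d p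
      rw [Matrix.diagonalAlgHom_apply, Matrix.diagonalAlgHom_apply] at hdiag
      have hfun : (Polynomial.aeval d p : Fin n → k) = fun j => if j = i then 1 else 0 := by
        funext j
        have h2 := Polynomial.aeval_algHom_apply (Pi.evalAlgHom k (fun _ => k) j) d p
        simp only [Pi.evalAlgHom_apply] at h2
        rw [← h2, Polynomial.aeval_def, Polynomial.eval₂_eq_eval_map, Algebra.algebraMap_self, Polynomial.map_id, hev j]
      rw [hdiag, hfun]
      ext a b
      by_cases h : a = b
      · subst h
        by_cases h2 : a = i <;> simp [Matrix.single, h2, eq_comm]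
      · have h3 : ¬(i = a ∧ i = b) := by rintro ⟨rfl, rfl⟩; exact h rfl
        simp [Matrix.diagonal_apply_ne _ h, Matrix.single, h3]
    rw [← key]
    have : Polynomial.aeval (Matrix.diagonal d) p ∈ Algebra.adjoin k {Matrix.diagonal d} :=
      Polynomial.aeval_mem_adjoin_singleton k _
    exact Algebra.adjoin_mono (Set.singleton_subset_iff.mpr (Set.mem_insert _ _)) this
  have hEij : ∀ i j : Fin n, Matrix.single i j (1 : k) ∈ A := by
    intro i j
    have : Matrix.single i i (1 : k) * J * Matrix.single j j (1 : k)
        = Matrix.single i j (1 : k) := by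
      ext a b
      simp only [Matrix.mul_apply, Matrix.single, Matrix.of_apply]
      rcases eq_or_ne a i with rfl | ha
      · rcases eq_or_ne b j with rfl | hb
        · simp [Finset.sum_ite_eq, hJ]
        · simp [Finset.sum_ite_eq, hJ, hb, Ne.symm hb]
      · simp [Ne.symm ha]
    rw [← this]
    exact A.mul_mem (A.mul_mem (hEii i) hJA) (hEii j)
  rw [eq_top_iff]
  intro M _
  rw [Matrix.matrix_eq_sum_single M]
  refine A.sum_mem fun i _ => A.sum_mem fun j _ => ?_
  rw [show Matrix.single i j (M i j) = M i j • Matrix.single i j (1 : k) by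
    rw [Matrix.smul_single, smul_eq_mul, mul_one]]
  exact A.smul_mem (hEij i j) _
end

section
/- Let k be a field, n ≥ 1 an integer, and S an arbitrary subset of the matrix algebra M_n(k). Then the k-linear span of the set of all products of at most n² elements of S (where the empty product is the identity matrix) equals the underlying k-submodule of the k-subalgebra of M_n(k) generated by S. -/
section Aux

variable {A : Type*} [Monoid A]

open Pointwise

/-- Elements of a pointwise power `s ^ m` are exactly products of lists of length `m`
with entries in `s`. -/
lemma set_pow_eq_lists (s : Set A) (m : ℕ) :
    (s ^ m : Set A) = {M : A | ∃ l : List A,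
      l.length = m ∧ (∀ x ∈ l, x ∈ s) ∧ M = l.prod} := by
  ext M
  constructor
  · intro hM
    obtain ⟨f, hf⟩ := Set.mem_pow.mp hM
    refine ⟨List.ofFn fun i => (f i : A), by simp, ?_, hf.symm⟩
    intro x hx
    obtain ⟨i, rfl⟩ := List.mem_ofFn.mp hx
    exact (f i).2
  · rintro ⟨l, rfl, hl, rfl⟩
    refine Set.mem_pow.mpr ⟨fun i => ⟨l.get i, hl _ (l.get_mem i)⟩, ?_⟩
    simp [List.ofFn_get]

/-- From a list with entries in `insert 1 s`, remove the `1`s. -/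
lemma strip_ones (s : Set A) :
    ∀ l : List A, (∀ x ∈ l, x ∈ insert 1 s) →
      ∃ l' : List A, l'.length ≤ l.length ∧ (∀ x ∈ l', x ∈ s) ∧ l'.prod = l.prod := by
  intro l
  induction l with
  | nil => exact fun _ => ⟨[], le_rfl, by simp, rfl⟩
  | cons a t ih =>
    intro h
    obtain ⟨l', hlen, hmem, hprod⟩ := ih fun x hx => h x (List.mem_cons_of_mem _ hx)
    rcases h a List.mem_cons_self with rfl | ha
    · exact ⟨l', hlen.trans (by simp), hmem, by simp [hprod]⟩
    · refine ⟨a :: l', by simpa using hlen, ?_, by simp [hprod]⟩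
      intro x hx
      rcases List.mem_cons.mp hx with rfl | hx
      · exact ha
      · exact hmem x hx

/-- Products of at most `m` elements of `s` are exactly elements of `(insert 1 s) ^ m`. -/
lemma lists_le_eq_insert_pow (s : Set A) (m : ℕ) :
    {M : A | ∃ l : List A, l.length ≤ m ∧ (∀ x ∈ l, x ∈ s) ∧ M = l.prod}
      = (insert 1 s) ^ m := by
  rw [set_pow_eq_lists]
  ext M
  constructor
  · rintro ⟨l, hlen, hmem, rfl⟩
    refine ⟨l ++ List.replicate (m - l.length) 1, by simp [Nat.add_sub_cancel' hlen], ?_, by simp⟩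
    intro x hx
    rcases List.mem_append.mp hx with hx | hx
    · exact Set.mem_insert_of_mem _ (hmem x hx)
    · rw [List.eq_of_mem_replicate hx]; exact Set.mem_insert _ _
  · rintro ⟨l, rfl, hmem, rfl⟩
    obtain ⟨l', hlen, hmem', hprod⟩ := strip_ones s l hmem
    exact ⟨l', hlen, hmem', hprod.symm⟩

end Aux

/-- Let `k` be a field, `n ≥ 1`, and `S ⊆ M_n(k)`. The `k`-linear span of the set of
all products of at most `n²` elements of `S` (the empty product being `1`) equals the
underlying `k`-submodule of the `k`-subalgebra of `M_n(k)` generated by `S`. -/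
theorem stmt_2 {k : Type*} [Field k] {n : ℕ} (hn : 1 ≤ n)
    (S : Set (Matrix (Fin n) (Fin n) k)) :
    Submodule.span k {M : Matrix (Fin n) (Fin n) k |
        ∃ l : List (Matrix (Fin n) (Fin n) k),
          l.length ≤ n ^ 2 ∧ (∀ x ∈ l, x ∈ S) ∧ M = l.prod} =
      Subalgebra.toSubmodule (Algebra.adjoin k S) := by
  set P : Submodule k (Matrix (Fin n) (Fin n) k) := Submodule.span k (insert 1 S) with hP
  have hpow : ∀ m : ℕ, P ^ m = Submodule.span k
      {M : Matrix (Fin n) (Fin n) k | ∃ l : List (Matrix (Fin n) (Fin n) k),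
        l.length ≤ m ∧ (∀ x ∈ l, x ∈ S) ∧ M = l.prod} := by
    intro m
    rw [hP, Submodule.span_pow, lists_le_eq_insert_pow]
  have honeP : (1 : Matrix (Fin n) (Fin n) k) ∈ P := Submodule.subset_span (Set.mem_insert _ _)
  have honele : (1 : Submodule k (Matrix (Fin n) (Fin n) k)) ≤ P := (Submodule.one_le).mpr honeP
  -- monotonicity of powers
  have hmono : ∀ i j : ℕ, i ≤ j → P ^ i ≤ P ^ j := by
    intro i j hij
    induction j with
    | zero => simp [Nat.le_zero.mp hij]
    | succ j ih =>
      rcases Nat.lt_or_ge i (j + 1) with h | h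
      · refine (ih (Nat.lt_succ_iff.mp h)).trans ?_
        rw [pow_succ]
        calc P ^ j = P ^ j * 1 := (mul_one _).symm
          _ ≤ P ^ j * P := mul_le_mul' le_rfl honele
      · have : i = j + 1 := le_antisymm hij h
        simp [this]
  -- the chain stabilizes before n^2
  have hfinA : Module.finrank k (Matrix (Fin n) (Fin n) k) = n ^ 2 := by
    rw [Module.finrank_matrix, Module.finrank_self, Fintype.card_fin, mul_one, sq]
  have hstab : ∃ m : ℕ, m < n ^ 2 ∧ P ^ (m + 1) = P ^ m := by
    by_contra hcon
    push_neg at hcon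
    have hlt : ∀ m : ℕ, m < n ^ 2 → P ^ m < P ^ (m + 1) := fun m hm =>
      lt_of_le_of_ne (hmono m (m + 1) (Nat.le_succ m)) (fun h => hcon m hm h.symm)
    have hrank : ∀ m : ℕ, m ≤ n ^ 2 → m + 1 ≤ Module.finrank k (P ^ m : Submodule k (Matrix (Fin n) (Fin n) k)) := by
      intro m
      induction m with
      | zero =>
        intro _
        have h1 : (1 : Matrix (Fin n) (Fin n) k) ∈ (P ^ 0 : Submodule k (Matrix (Fin n) (Fin n) k)) := by
          rw [pow_zero]; exact (Submodule.one_le).mp le_rfl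
        have hne : (P ^ 0 : Submodule k (Matrix (Fin n) (Fin n) k)) ≠ ⊥ := by
          intro hbot
          haveI : Nonempty (Fin n) := ⟨⟨0, hn⟩⟩
          have := hbot ▸ h1
          simp only [Submodule.mem_bot] at this
          exact one_ne_zero this
        have : 0 < Module.finrank k (P ^ 0 : Submodule k (Matrix (Fin n) (Fin n) k)) :=
          Module.finrank_pos_iff.mpr (Submodule.nontrivial_iff_ne_bot.mpr hne)
        omega
      | succ m ih =>
        intro hm
        have h1 := ih (by omega)
        have h2 : Module.finrank k (P ^ m : Submodule k (Matrix (Fin n) (Fin n) k))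
            < Module.finrank k (P ^ (m + 1) : Submodule k (Matrix (Fin n) (Fin n) k)) :=
          Submodule.finrank_lt_finrank_of_lt (hlt m (by omega))
        omega
    have := hrank (n ^ 2) le_rfl
    have hle := Submodule.finrank_le (P ^ (n ^ 2) : Submodule k (Matrix (Fin n) (Fin n) k))
    omega
  obtain ⟨m, hmlt, hm⟩ := hstab
  have hstable : ∀ i : ℕ, P ^ (m + i) = P ^ m := by
    intro i
    induction i with
    | zero => rfl
    | succ i ih =>
      have : m + (i + 1) = (m + i) + 1 := by omega
      rw [this, pow_succ, ih, ← pow_succ, hm]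
  have hge : ∀ j : ℕ, P ^ j ≤ P ^ (n ^ 2) := by
    intro j
    rcases Nat.le_total j (n ^ 2) with h | h
    · exact hmono j _ h
    · refine le_of_eq ?_
      calc P ^ j = P ^ (m + (j - m)) := by rw [Nat.add_sub_cancel' (by omega)]
        _ = P ^ m := hstable _
        _ = P ^ (m + (n ^ 2 - m)) := (hstable _).symm
        _ = P ^ (n ^ 2) := by rw [Nat.add_sub_cancel' (by omega)]
  rw [← hpow]
  apply le_antisymm
  · -- P ^ n² ≤ adjoin
    rw [hpow, Submodule.span_le]
    rintro M ⟨l, -, hl, rfl⟩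
    exact Subalgebra.list_prod_mem _ fun x hx => Algebra.subset_adjoin (hl x hx)
  · -- adjoin ≤ P ^ n²
    rw [Algebra.adjoin_eq_span, Submodule.span_le]
    intro x hx
    induction hx using Submonoid.closure_induction with
    | mem y hy =>
      exact hge 1 (by simpa [pow_one] using
        Submodule.subset_span (Set.mem_insert_of_mem _ hy))
    | one => exact hge 0 (by rw [pow_zero]; exact (Submodule.one_le).mp le_rfl)
    | mul y z _ _ hy hz =>
      have : y * z ∈ P ^ (n ^ 2) * P ^ (n ^ 2) := Submodule.mul_mem_mul hy hz
      rw [← pow_add] at this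
      exact hge _ this
end

section
/- Let k be an algebraically closed field, n ≥ 1 an integer, and A, B ∈ GL_n(k). Then the following are equivalent: (i) the subgroup generated by A and B acts irreducibly on kⁿ, i.e., the only k-subspaces W ⊆ kⁿ with A·W ⊆ W and B·W ⊆ W are 0 and kⁿ; (ii) the k-linear span of the set of all products of at most n² matrices, each equal to A or to B (the empty product being the identity), is all of M_n(k). -/
open Module

section Burnside
variable {k : Type*} [Field k] [IsAlgClosed k] {n : ℕ}

local notation "V" => Fin n → k

/-- diagonal action of an endomorphism on `Fin n → V`. -/
private def dg (s : End k V) : End k (Fin n → V) :=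
  LinearMap.pi fun i => s.comp (LinearMap.proj i)

@[simp] private lemma dg_apply (s : End k V) (x : Fin n → V) (i : Fin n) :
    dg s x i = s (x i) := rfl

/-- Schur-type lemma: an endomorphism commuting with an irreducible set is scalar. -/
private lemma schur (hn : 1 ≤ n) (S : Subalgebra k (End k V))
    (hirr : ∀ W : Submodule k V, (∀ s ∈ S, ∀ x ∈ W, s x ∈ W) → W = ⊥ ∨ W = ⊤)
    (φ : End k V) (hφ : ∀ s ∈ S, φ * s = s * φ) : ∃ c : k, φ = c • 1 := by
  have : Nontrivial V := by
    refine ⟨Pi.single ⟨0, hn⟩ 1, 0, ?_⟩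
    intro h
    have := congrFun h ⟨0, hn⟩
    simp at this
  obtain ⟨c, hc⟩ := Module.End.exists_eigenvalue φ
  refine ⟨c, ?_⟩
  have hW : φ.eigenspace c = ⊥ ∨ φ.eigenspace c = ⊤ := by
    refine hirr _ ?_
    intro s hs x hx
    rw [Module.End.eigenspace_def, LinearMap.mem_ker] at hx ⊢
    have : (φ - c • 1) * s = s * (φ - c • 1) := by
      simp only [sub_mul, mul_sub, hφ s hs, smul_mul_assoc, one_mul, mul_smul_comm, mul_one]
    calc (φ - c • 1) (s x) = ((φ - c • 1) * s) x := rfl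
      _ = (s * (φ - c • 1)) x := by rw [this]
      _ = s ((φ - c • 1) x) := rfl
      _ = 0 := by rw [hx, map_zero]
  rcases hW with h | h
  · exact absurd h hc
  · refine LinearMap.ext fun x => ?_
    have hx : x ∈ φ.eigenspace c := h ▸ Submodule.mem_top
    rw [Module.End.eigenspace_def, LinearMap.mem_ker] at hx
    have := sub_eq_zero.mp hx
    simpa using this

private lemma burnside (hn : 1 ≤ n) (S : Subalgebra k (End k V))
    (hirr : ∀ W : Submodule k V, (∀ s ∈ S, ∀ x ∈ W, s x ∈ W) → W = ⊥ ∨ W = ⊤) :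
    S = ⊤ := by
  classical
  -- the orbit map
  set Φ : End k V →ₗ[k] (Fin n → V) :=
    LinearMap.pi (fun i => LinearMap.applyₗ (Pi.single i (1:k))) with hΦ
  have Φ_apply : ∀ s : End k V, ∀ i, Φ s i = s (Pi.single i 1) := fun s i => rfl
  set N : Submodule k (Fin n → V) := Submodule.map Φ (Subalgebra.toSubmodule S) with hN
  -- invariance predicate on submodules of Fin n → V
  set Inv : Submodule k (Fin n → V) → Prop :=
    fun W => ∀ s ∈ S, ∀ x ∈ W, dg s x ∈ W with hInv
  have hNinv : Inv N := by
    rintro s hs x ⟨t, ht, rfl⟩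
    refine ⟨s * t, S.mul_mem hs ht, ?_⟩
    ext i
    simp [Φ_apply, Module.End.mul_apply]
  -- single inclusions
  set ι : Fin n → (V →ₗ[k] (Fin n → V)) := fun i => LinearMap.single k (fun _ => V) i with hι
  have ι_dg : ∀ (s : End k V) (i : Fin n) (v : V), ι i (s v) = dg s (ι i v) := by
    intro s i v; ext j
    by_cases h : j = i
    · subst h; simp [hι, Pi.single_apply]
    · simp [hι, Pi.single_apply, h]
  have range_inv : ∀ i, Inv (LinearMap.range (ι i)) := by
    rintro i s hs x ⟨v, rfl⟩
    exact ⟨s v, ι_dg s i v⟩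
  -- key: invariant U with range (ι i) ⊄ U meets range (ι i) trivially
  have key : ∀ (U : Submodule k (Fin n → V)) (i : Fin n), Inv U →
      ¬ LinearMap.range (ι i) ≤ U → ∀ v : V, ι i v ∈ U → v = 0 := by
    intro U i hU hle v hv
    set W0 : Submodule k V := U.comap (ι i) with hW0
    have hW0inv : ∀ s ∈ S, ∀ w ∈ W0, s w ∈ W0 := by
      intro s hs w hw
      simp only [hW0, Submodule.mem_comap] at hw ⊢
      rw [ι_dg]
      exact hU s hs _ hw
    rcases hirr W0 hW0inv with h | h
    · have : v ∈ W0 := hv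
      rw [h] at this; simpa using this
    · exfalso; apply hle
      rintro x ⟨w, rfl⟩
      have : w ∈ W0 := h ▸ Submodule.mem_top
      exact this
  -- find a maximal invariant complement candidate
  have hnoeth : IsNoetherian k (Fin n → V) := inferInstance
  obtain ⟨W', hW'mem, hW'max⟩ := (set_has_maximal_iff_noetherian.mpr hnoeth)
      {W : Submodule k (Fin n → V) | Inv W ∧ N ⊓ W = ⊥} ⟨⊥, by
        constructor
        · intro s hs x hx; simp only [Submodule.mem_bot] at hx; simp [hx]
        · simp⟩
  obtain ⟨hW'inv, hW'disj⟩ := hW'mem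
  -- N and W' are complementary
  have hcompl : IsCompl N W' := by
    constructor
    · exact disjoint_iff.mpr hW'disj
    · rw [codisjoint_iff]
      by_contra hne
      have hex : ∃ i : Fin n, ¬ LinearMap.range (ι i) ≤ N ⊔ W' := by
        by_contra hall
        push_neg at hall
        apply hne
        rw [eq_top_iff]
        intro x _
        have hx : x = ∑ i : Fin n, ι i (x i) := by
          simp only [hι, LinearMap.coe_single]
          exact (Finset.univ_sum_single x).symm
        rw [hx]
        exact Submodule.sum_mem _ fun i _ => hall i ⟨x i, rfl⟩
      obtain ⟨i, hi⟩ := hex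
      -- enlarge W'
      have hbig : Inv (W' ⊔ LinearMap.range (ι i)) ∧ N ⊓ (W' ⊔ LinearMap.range (ι i)) = ⊥ := by
        constructor
        · intro s hs x hx
          rcases Submodule.mem_sup.mp hx with ⟨y, hy, z, hz, rfl⟩
          rw [map_add]
          exact Submodule.add_mem _ (Submodule.mem_sup_left (hW'inv s hs y hy))
            (Submodule.mem_sup_right (range_inv i s hs z hz))
        · rw [eq_bot_iff]
          rintro x ⟨hxN, hx2⟩
          rcases Submodule.mem_sup.mp hx2 with ⟨w, hw, u, ⟨v, rfl⟩, rfl⟩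
          have huNW : ι i v ∈ N ⊔ W' := by
            have : ι i v = (w + ι i v) - w := by ring_nf
            rw [this]
            exact Submodule.sub_mem _ (Submodule.mem_sup_left hxN) (Submodule.mem_sup_right hw)
          have hinv : Inv (N ⊔ W') := by
            intro s hs x hx
            rcases Submodule.mem_sup.mp hx with ⟨y, hy, z, hz, rfl⟩
            rw [map_add]
            exact Submodule.add_mem _ (Submodule.mem_sup_left (hNinv s hs y hy))
              (Submodule.mem_sup_right (hW'inv s hs z hz))
          have hv0 : v = 0 := key _ i hinv hi v huNW
          rw [hv0, map_zero, add_zero] at hxN ⊢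
          have : w ∈ N ⊓ W' := ⟨hxN, hw⟩
          rw [hW'disj] at this
          simpa using this
      have hlt : W' < W' ⊔ LinearMap.range (ι i) := by
        refine lt_of_le_of_ne le_sup_left ?_
        intro heq
        apply hi
        calc LinearMap.range (ι i) ≤ W' ⊔ LinearMap.range (ι i) := le_sup_right
          _ = W' := heq.symm
          _ ≤ N ⊔ W' := le_sup_right
      exact hW'max _ hbig hlt
  -- the projection onto N
  set π : (Fin n → V) →ₗ[k] (Fin n → V) := N.subtype.comp (N.projectionOnto W' hcompl) with hπ
  have π_mem : ∀ x, π x ∈ N := fun x => (N.projectionOnto W' hcompl x).2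
  have π_left : ∀ x ∈ N, π x = x := by
    intro x hx
    simp only [hπ, LinearMap.comp_apply]
    rw [show x = ((⟨x, hx⟩ : N) : Fin n → V) from rfl, Submodule.linearProjOfIsCompl_apply_left]
    rfl
  have π_right : ∀ x ∈ W', π x = 0 := by
    intro x hx
    simp only [hπ, LinearMap.comp_apply]
    rw [show x = ((⟨x, hx⟩ : W') : Fin n → V) from rfl, Submodule.linearProjOfIsCompl_apply_right]
    rfl
  -- π is equivariant
  have π_equiv : ∀ s ∈ S, ∀ x, π (dg s x) = dg s (π x) := by
    intro s hs x
    obtain ⟨u, w, hu, hw, huw⟩ := Submodule.codisjoint_iff_exists_add_eq.mp hcompl.codisjoint x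
    rw [← huw]
    have h1 : π (u + w) = u := by rw [map_add, π_left u hu, π_right w hw, add_zero]
    rw [h1, map_add (dg s), map_add π, π_left _ (hNinv s hs u hu), π_right _ (hW'inv s hs w hw),
      add_zero]
  -- matrix entries of π are scalars
  have entries : ∀ i j : Fin n, ∃ c : k,
      (LinearMap.proj i).comp (π.comp (ι j)) = c • (1 : End k V) := by
    intro i j
    apply schur hn S hirr
    intro s hs
    refine LinearMap.ext fun v => ?_
    simp only [Module.End.mul_apply, LinearMap.comp_apply, LinearMap.proj_apply]
    rw [ι_dg, π_equiv s hs]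
    rfl
  choose c hc using entries
  have π_formula : ∀ (x : Fin n → V) (i : Fin n), π x i = ∑ j : Fin n, c i j • x j := by
    intro x i
    have hx : x = ∑ j : Fin n, ι j (x j) := by
      simp only [hι, LinearMap.coe_single]
      exact (Finset.univ_sum_single x).symm
    conv_lhs => rw [hx]
    rw [map_sum, Finset.sum_apply]
    refine Finset.sum_congr rfl fun j _ => ?_
    have := congrFun (congrArg DFunLike.coe (hc i j)) (x j)
    simp only [LinearMap.comp_apply, LinearMap.proj_apply, LinearMap.smul_apply,
      Module.End.one_apply] at this
    exact this
  -- conclude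
  rw [eq_top_iff]
  intro f _
  -- f diag commutes with π
  have hcomm : ∀ x, π (dg f x) = dg f (π x) := by
    intro x
    funext i
    rw [dg_apply, π_formula, π_formula]
    rw [map_sum]
    refine Finset.sum_congr rfl fun j _ => ?_
    rw [dg_apply, map_smul]
  set b : Fin n → V := Φ 1 with hb
  have hbN : b ∈ N := ⟨1, S.one_mem, rfl⟩
  have hfbN : dg f b ∈ N := by
    rw [← π_left b hbN, ← hcomm]
    exact π_mem _
  obtain ⟨s, hs, hsb⟩ := hfbN
  have : s = f := by
    apply (Pi.basisFun k (Fin n)).ext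
    intro i
    rw [Pi.basisFun_apply]
    have := congrFun hsb i
    rw [Φ_apply] at this
    rw [this]
    simp [hb, Φ_apply]
  exact this ▸ hs

end Burnside

/-- Let `k` be an algebraically closed field, `n ≥ 1`, and `A, B ∈ GL_n(k)`.
Then `⟨A, B⟩` acts irreducibly on `kⁿ` if and only if the `k`-linear span of all
products of at most `n²` matrices each equal to `A` or `B` (the empty product
being the identity) is all of `M_n(k)`. -/
theorem stmt_3 {k : Type*} [Field k] [IsAlgClosed k] {n : ℕ} (hn : 1 ≤ n)
    (A B : GL (Fin n) k) :
    (∀ W : Submodule k (Fin n → k),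
        (∀ x ∈ W, Matrix.mulVec (A : Matrix (Fin n) (Fin n) k) x ∈ W) →
        (∀ x ∈ W, Matrix.mulVec (B : Matrix (Fin n) (Fin n) k) x ∈ W) →
        W = ⊥ ∨ W = ⊤) ↔
      Submodule.span k {M : Matrix (Fin n) (Fin n) k |
        ∃ l : List (Matrix (Fin n) (Fin n) k),
          l.length ≤ n ^ 2 ∧
          (∀ x ∈ l, x = (A : Matrix (Fin n) (Fin n) k) ∨
            x = (B : Matrix (Fin n) (Fin n) k)) ∧
          M = l.prod} = ⊤ := by
  classical
  set Am : Matrix (Fin n) (Fin n) k := (A : Matrix (Fin n) (Fin n) k) with hAm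
  set Bm : Matrix (Fin n) (Fin n) k := (B : Matrix (Fin n) (Fin n) k) with hBm
  set Wd : ℕ → Set (Matrix (Fin n) (Fin n) k) := fun m =>
    {M | ∃ l : List (Matrix (Fin n) (Fin n) k), l.length ≤ m ∧
      (∀ x ∈ l, x = Am ∨ x = Bm) ∧ M = l.prod} with hWd
  set T : ℕ → Submodule k (Matrix (Fin n) (Fin n) k) := fun m => Submodule.span k (Wd m) with hT
  constructor
  · -- hard direction
    intro hirrAB
    -- the adjoined algebra of endomorphisms is everything (Burnside)
    set e : Matrix (Fin n) (Fin n) k ≃ₐ[k] Module.End k (Fin n → k) := Matrix.toLinAlgEquiv' with he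
    have hadj_end : Algebra.adjoin k {e Am, e Bm} = ⊤ := by
      apply burnside hn
      intro W hW
      apply hirrAB W
      · intro x hx
        have := hW (e Am) (Algebra.subset_adjoin (by simp)) x hx
        simpa [he, Matrix.toLinAlgEquiv'_apply] using this
      · intro x hx
        have := hW (e Bm) (Algebra.subset_adjoin (by simp)) x hx
        simpa [he, Matrix.toLinAlgEquiv'_apply] using this
    -- transfer back to matrices
    have hadj_mat : Algebra.adjoin k ({Am, Bm} : Set (Matrix (Fin n) (Fin n) k)) = ⊤ := by
      have hmap := AlgHom.map_adjoin e.toAlgHom ({Am, Bm} : Set _)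
      rw [show ⇑e.toAlgHom '' {Am, Bm} = {e Am, e Bm} by
        simp [Set.image_insert_eq, Set.image_singleton]] at hmap
      rw [hadj_end] at hmap
      apply Subalgebra.map_injective (f := e.toAlgHom) e.injective
      rw [hmap, Algebra.map_top]
      symm
      rw [eq_top_iff]
      rintro x -
      exact ⟨e.symm x, e.apply_symm_apply x⟩
    -- the chain of spans of words
    have hmono : ∀ {a b : ℕ}, a ≤ b → T a ≤ T b := by
      intro a b hab
      apply Submodule.span_mono
      rintro M ⟨l, hl, hmem, rfl⟩
      exact ⟨l, hl.trans hab, hmem, rfl⟩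
    have hone : ∀ m, (1 : Matrix (Fin n) (Fin n) k) ∈ T m := fun m =>
      Submodule.subset_span ⟨[], by simp⟩
    have hWdmul : ∀ {a b : ℕ} {M N : Matrix (Fin n) (Fin n) k},
        M ∈ Wd a → N ∈ Wd b → M * N ∈ Wd (a + b) := by
      rintro a b M N ⟨la, hla, hmema, rfl⟩ ⟨lb, hlb, hmemb, rfl⟩
      refine ⟨la ++ lb, ?_, ?_, ?_⟩
      · rw [List.length_append]; omega
      · intro y hy
        rcases List.mem_append.mp hy with h | h
        · exact hmema y h
        · exact hmemb y h
      · rw [List.prod_append]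
    have hTmul : ∀ (a b : ℕ) (x y : Matrix (Fin n) (Fin n) k),
        x ∈ T a → y ∈ T b → x * y ∈ T (a + b) := by
      intro a b x y hx hy
      have h1 : x * y ∈ T a * T b := Submodule.mul_mem_mul hx hy
      have h2 : T a * T b ≤ T (a + b) := by
        rw [hT]
        rw [Submodule.span_mul_span]
        apply Submodule.span_le.mpr
        rw [Set.mul_subset_iff]
        intro p hp q hq
        exact Submodule.subset_span (hWdmul hp hq)
      exact h2 h1
    have hsingle : Am ∈ T 1 ∧ Bm ∈ T 1 := by
      constructor
      · exact Submodule.subset_span ⟨[Am], by simp⟩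
      · exact Submodule.subset_span ⟨[Bm], by simp⟩
    have hstab : ∀ m, T m = T (m + 1) → ∀ p, T (m + p) = T m := by
      intro m hm p
      induction p with
      | zero => rfl
      | succ p ih =>
        refine le_antisymm ?_ (hmono (by omega))
        rcases Nat.eq_zero_or_pos p with hp | hp
        · subst hp; rw [show m + 1 = m + 1 from rfl]; exact hm.ge
        apply Submodule.span_le.mpr
        rintro M ⟨l, hl, hmem, rfl⟩
        cases l with
        | nil => simpa using hone m
        | cons a t =>
          rw [List.prod_cons]
          have hta : t.prod ∈ T m := by
            rw [← ih]
            refine hmono (le_refl _) (Submodule.subset_span ⟨t, ?_, ?_, rfl⟩)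
            · simp at hl; omega
            · exact fun y hy => hmem y (List.mem_cons_of_mem a hy)
          have haT : a ∈ T 1 := by
            rcases hmem a List.mem_cons_self with h | h
            · rw [h]; exact hsingle.1
            · rw [h]; exact hsingle.2
          have := hTmul 1 m a t.prod haT hta
          rw [show (1 : ℕ) + m = m + 1 from by omega] at this
          rw [← hm] at this
          exact this
    -- find stabilization point
    haveI : Nonempty (Fin n) := ⟨⟨0, hn⟩⟩
    have hex : ∃ m, m ≤ n ^ 2 ∧ T m = T (m + 1) := by
      by_contra hc
      push_neg at hc
      have hrank : ∀ m, m ≤ n ^ 2 → m + 1 ≤ Module.finrank k (T m) := by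
        intro m
        induction m with
        | zero =>
          intro _
          have : T 0 ≠ ⊥ := by
            intro h
            have h1 := hone 0
            rw [h] at h1
            simp only [Submodule.mem_bot] at h1
            exact one_ne_zero h1
          have hiff := Submodule.finrank_eq_zero (S := T 0)
          have h0 : Module.finrank k (T 0) ≠ 0 := fun h => this (hiff.mp h)
          omega
        | succ m ih =>
          intro hm
          have hlt : T m < T (m + 1) :=
            lt_of_le_of_ne (hmono (by omega)) (hc m (by omega))
          have := Submodule.finrank_lt_finrank_of_lt hlt
          have h2 := ih (by omega)
          omega
      have h1 := hrank (n ^ 2) le_rfl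
      have h2 := Submodule.finrank_le (T (n ^ 2))
      rw [Module.finrank_matrix] at h2
      simp [Fintype.card_fin] at h2
      have : n ^ 2 = n * n := sq n
      omega
    obtain ⟨m, hm, hstabm⟩ := hex
    have hTm_mul : ∀ x y : Matrix (Fin n) (Fin n) k, x ∈ T m → y ∈ T m → x * y ∈ T m := by
      intro x y hx hy
      have := hTmul m m x y hx hy
      rwa [hstab m hstabm m] at this
    set SA : Subalgebra k (Matrix (Fin n) (Fin n) k) :=
      (T m).toSubalgebra (hone m) hTm_mul with hSA
    have hABm : Am ∈ T m ∧ Bm ∈ T m := by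
      have h1 : T 1 ≤ T m := by
        calc T 1 ≤ T (m + 1) := hmono (by omega)
          _ = T m := hstabm.symm
      exact ⟨h1 hsingle.1, h1 hsingle.2⟩
    have hTtop : T m = ⊤ := by
      rw [eq_top_iff]
      intro x _
      have hx : x ∈ Algebra.adjoin k ({Am, Bm} : Set (Matrix (Fin n) (Fin n) k)) := by
        rw [hadj_mat]; trivial
      have hle : Algebra.adjoin k ({Am, Bm} : Set (Matrix (Fin n) (Fin n) k)) ≤ SA := by
        apply Algebra.adjoin_le
        rintro y (rfl | rfl)
        · exact Submodule.mem_toSubalgebra.mpr hABm.1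
        · exact Submodule.mem_toSubalgebra.mpr hABm.2
      exact Submodule.mem_toSubalgebra.mp (hle hx)
    show T (n ^ 2) = ⊤
    calc T (n ^ 2) = T m := by
          rw [show n ^ 2 = m + (n ^ 2 - m) from by omega]
          exact hstab m hstabm _
      _ = ⊤ := hTtop
  · -- easy direction
    intro hspan W hA hB
    by_cases hbot : W = ⊥
    · exact Or.inl hbot
    · right
      obtain ⟨x, hxW, hx0⟩ := (Submodule.ne_bot_iff W).mp hbot
      have hword : ∀ l : List (Matrix (Fin n) (Fin n) k), (∀ y ∈ l, y = Am ∨ y = Bm) →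
          ∀ v ∈ W, l.prod.mulVec v ∈ W := by
        intro l
        induction l with
        | nil => intro _ v hv; simpa [Matrix.one_mulVec] using hv
        | cons a t ih =>
          intro hmem v hv
          rw [List.prod_cons, ← Matrix.mulVec_mulVec]
          have ht := ih (fun y hy => hmem y (List.mem_cons_of_mem a hy)) v hv
          rcases hmem a List.mem_cons_self with h | h
          · rw [h]; exact hA _ ht
          · rw [h]; exact hB _ ht
      have hall : ∀ M : Matrix (Fin n) (Fin n) k, ∀ v ∈ W, M.mulVec v ∈ W := by
        intro M
        have hM : M ∈ Submodule.span k (Wd (n ^ 2)) := by simp only [hWd]; rw [hspan]; trivial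
        induction hM using Submodule.span_induction with
        | mem y hy =>
          obtain ⟨l, _, hl, rfl⟩ := hy
          exact hword l hl
        | zero => intro v hv; simp [Matrix.zero_mulVec]
        | add y z _ _ hy hz =>
          intro v hv
          rw [Matrix.add_mulVec]
          exact W.add_mem (hy v hv) (hz v hv)
        | smul c y _ hy =>
          intro v hv
          rw [Matrix.smul_mulVec]
          exact W.smul_mem c (hy v hv)
      rw [eq_top_iff]
      intro y _
      obtain ⟨i, hi⟩ : ∃ i, x i ≠ 0 := by
        by_contra h
        push_neg at h
        exact hx0 (funext h)
      have : (Matrix.of fun j l => if l = i then (x i)⁻¹ * y j else 0).mulVec x = y := by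
        funext j
        simp only [Matrix.mulVec, dotProduct, Matrix.of_apply, ite_mul, zero_mul]
        rw [Finset.sum_ite_eq' Finset.univ i]
        simp [Finset.mem_univ, mul_assoc, inv_mul_cancel₀ hi]
        field_simp
      rw [← this]
      exact hall _ x hxW
end

section
/- Let k be an algebraically closed field and n ≥ 1 an integer. There exists a nonzero polynomial F in 2n² variables over k (one variable for each entry of an ordered pair of n×n matrices) such that: (i) for all A, B ∈ GL_n(k), if F evaluated at the entries of (A, B) is nonzero, then the subgroup generated by A and B acts irreducibly on kⁿ (i.e., the only subspaces of kⁿ invariant under both A and B are 0 and kⁿ); and (ii) there exist A, B ∈ GL_n(k) at which F evaluates to a nonzero element. (Consequently, the set of pairs (A, B) ∈ GL_n(k) × GL_n(k) generating an irreducible subgroup contains a nonempty Zariski-dense open subset of GL_n(k) × GL_n(k).) -/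
open Matrix MvPolynomial
open scoped Kronecker

/-- If a subspace of `kⁿ` is stable under every matrix, it is `⊥` or `⊤`. -/
private lemma aux_stab_all {k : Type*} [Field k] {n : ℕ}
    (W : Submodule k (Fin n → k)) (hW : W ≠ ⊥)
    (h : ∀ C : Matrix (Fin n) (Fin n) k, ∀ x ∈ W, C.mulVec x ∈ W) : W = ⊤ := by
  obtain ⟨x, hxW, hx⟩ := Submodule.exists_mem_ne_zero_of_ne_bot hW
  obtain ⟨t, ht⟩ : ∃ t, x t ≠ 0 := by
    by_contra hc
    push_neg at hc
    exact hx (funext hc)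
  rw [eq_top_iff]
  intro y _
  have key := h (Matrix.of fun p q => if q = t then y p * (x t)⁻¹ else 0) x hxW
  have heq : (Matrix.of fun p q => if q = t then y p * (x t)⁻¹ else 0).mulVec x = y := by
    funext p
    simp only [Matrix.mulVec, dotProduct, Matrix.of_apply, ite_mul, zero_mul]
    rw [Finset.sum_ite_eq' Finset.univ t fun q => y p * (x t)⁻¹ * x q]
    simp [ht]
  rwa [heq] at key

/-- A finite sum of matrices applied to a vector. -/
private lemma aux_sum_mulVec {k : Type*} [Field k] {n : ℕ} {ι : Type*} (s : Finset ι)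
    (f : ι → Matrix (Fin n) (Fin n) k) (x : Fin n → k) :
    (∑ w ∈ s, f w).mulVec x = ∑ w ∈ s, (f w).mulVec x := by
  funext p
  simp only [Matrix.mulVec, dotProduct, Matrix.sum_apply, Finset.sum_apply,
    Finset.sum_mul]
  exact Finset.sum_comm

/-- Let `k` be an algebraically closed field and `n ≥ 1`. There exists a nonzero
polynomial `F` in `2n²` variables over `k` (one variable for each entry of a pair of
`n × n` matrices) such that: (i) whenever `F` is nonzero at the entries of a pair
`(A, B)` of invertible matrices, the subgroup generated by `A` and `B` acts
irreducibly on `kⁿ`; and (ii) `F` is nonzero at some pair `(A, B)` of invertible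
matrices. -/
theorem stmt_4 {k : Type*} [Field k] [IsAlgClosed k] {n : ℕ} (hn : 1 ≤ n) :
    ∃ F : MvPolynomial ((Fin n × Fin n) ⊕ (Fin n × Fin n)) k,
      F ≠ 0 ∧
      (∀ A B : GL (Fin n) k,
        MvPolynomial.eval
          (Sum.elim (fun ij : Fin n × Fin n => (A : Matrix (Fin n) (Fin n) k) ij.1 ij.2)
                    (fun ij : Fin n × Fin n => (B : Matrix (Fin n) (Fin n) k) ij.1 ij.2))
          F ≠ 0 →
        ∀ W : Submodule k (Fin n → k),
          (∀ x ∈ W, Matrix.mulVec (A : Matrix (Fin n) (Fin n) k) x ∈ W) →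
          (∀ x ∈ W, Matrix.mulVec (B : Matrix (Fin n) (Fin n) k) x ∈ W) →
          W = ⊥ ∨ W = ⊤) ∧
      (∃ A B : GL (Fin n) k,
        MvPolynomial.eval
          (Sum.elim (fun ij : Fin n × Fin n => (A : Matrix (Fin n) (Fin n) k) ij.1 ij.2)
                    (fun ij : Fin n × Fin n => (B : Matrix (Fin n) (Fin n) k) ij.1 ij.2))
          F ≠ 0) := by
  classical
  set σ := (Fin n × Fin n) ⊕ (Fin n × Fin n)
  -- the generic matrices of variables
  set XA : Matrix (Fin n) (Fin n) (MvPolynomial σ k) :=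
    Matrix.of fun p q => MvPolynomial.X (Sum.inl (p, q)) with hXA
  set XB : Matrix (Fin n) (Fin n) (MvPolynomial σ k) :=
    Matrix.of fun p q => MvPolynomial.X (Sum.inr (p, q)) with hXB
  -- the polynomial: determinant of the matrix of the `n²` words `Aⁱ B Aʲ`
  set N : Matrix (Fin n × Fin n) (Fin n × Fin n) (MvPolynomial σ k) :=
    Matrix.of fun w pq =>
      (XA ^ (w.1 : ℕ) * XB * XA ^ (w.2 : ℕ)) pq.1 pq.2 with hN
  -- evaluation of the determinant at a pair of matrices
  have heval : ∀ A B : Matrix (Fin n) (Fin n) k,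
      MvPolynomial.eval
        (Sum.elim (fun ij : Fin n × Fin n => A ij.1 ij.2)
                  (fun ij : Fin n × Fin n => B ij.1 ij.2)) N.det =
      (Matrix.of fun (w pq : Fin n × Fin n) =>
        (A ^ (w.1 : ℕ) * B * A ^ (w.2 : ℕ)) pq.1 pq.2).det := by
    intro A B
    set φ := Sum.elim (fun ij : Fin n × Fin n => A ij.1 ij.2)
      (fun ij : Fin n × Fin n => B ij.1 ij.2) with hφ
    have hA : XA.map (MvPolynomial.eval φ) = A := by
      ext p q
      simp [hXA, hφ, Matrix.map_apply]
    have hB : XB.map (MvPolynomial.eval φ) = B := by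
      ext p q
      simp [hXB, hφ, Matrix.map_apply]
    rw [RingHom.map_det]
    congr 1
    ext w pq
    have key : (MvPolynomial.eval φ).mapMatrix (XA ^ (w.1 : ℕ) * XB * XA ^ (w.2 : ℕ))
        = A ^ (w.1 : ℕ) * B * A ^ (w.2 : ℕ) := by
      rw [_root_.map_mul, _root_.map_mul, map_pow, map_pow, RingHom.mapMatrix_apply,
        RingHom.mapMatrix_apply, hA, hB]
    rw [RingHom.mapMatrix_apply] at key
    show ((XA ^ (w.1 : ℕ) * XB * XA ^ (w.2 : ℕ)).map (MvPolynomial.eval φ)) pq.1 pq.2 = _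
    rw [key]
    rfl
  -- the witness pair
  have hwit : ∃ A B : GL (Fin n) k,
      MvPolynomial.eval
        (Sum.elim (fun ij : Fin n × Fin n => (A : Matrix (Fin n) (Fin n) k) ij.1 ij.2)
                  (fun ij : Fin n × Fin n => (B : Matrix (Fin n) (Fin n) k) ij.1 ij.2))
        N.det ≠ 0 := by
    -- pick `n` distinct nonzero elements of `k`
    have hinf : Infinite {x : k // x ≠ 0} := by
      have h0 : ({0}ᶜ : Set k).Infinite :=
        Set.Finite.infinite_compl (Set.finite_singleton 0)
      have := Set.infinite_coe_iff.mpr h0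
      exact Infinite.of_injective
        (fun a : ({0}ᶜ : Set k) => (⟨a.1, fun h => a.2 (by simp [h])⟩ : {x : k // x ≠ 0}))
        (fun a b hab => Subtype.ext (congrArg Subtype.val hab))
    let e : ℕ ↪ {x : k // x ≠ 0} := Infinite.natEmbedding _
    set μ : Fin n → k := fun i => (e i.1).1 with hμ
    have hμ0 : ∀ i, μ i ≠ 0 := fun i => (e i.1).2
    have hμinj : Function.Injective μ := by
      intro a b hab
      exact Fin.val_injective (e.injective (Subtype.ext hab))
    set A₀ : Matrix (Fin n) (Fin n) k := Matrix.diagonal μ with hA₀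
    set B₀ : Matrix (Fin n) (Fin n) k := Matrix.vandermonde μ with hB₀
    have hvdm : (Matrix.vandermonde μ).det ≠ 0 :=
      Matrix.det_vandermonde_ne_zero_iff.mpr hμinj
    have hdA : A₀.det ≠ 0 := by
      rw [hA₀, Matrix.det_diagonal]
      exact Finset.prod_ne_zero_iff.mpr fun i _ => hμ0 i
    have hdB : B₀.det ≠ 0 := hvdm
    refine ⟨Matrix.GeneralLinearGroup.mkOfDetNeZero A₀ hdA,
      Matrix.GeneralLinearGroup.mkOfDetNeZero B₀ hdB, ?_⟩
    have hcA : ((Matrix.GeneralLinearGroup.mkOfDetNeZero A₀ hdA : GL (Fin n) k) :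
        Matrix (Fin n) (Fin n) k) = A₀ := rfl
    have hcB : ((Matrix.GeneralLinearGroup.mkOfDetNeZero B₀ hdB : GL (Fin n) k) :
        Matrix (Fin n) (Fin n) k) = B₀ := rfl
    rw [hcA, hcB, heval A₀ B₀]
    -- factor the big matrix as a Kronecker product times a diagonal matrix
    have hfac : (Matrix.of fun (w pq : Fin n × Fin n) =>
          (A₀ ^ (w.1 : ℕ) * B₀ * A₀ ^ (w.2 : ℕ)) pq.1 pq.2)
        = ((Matrix.vandermonde μ)ᵀ ⊗ₖ (Matrix.vandermonde μ)ᵀ) *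
          Matrix.diagonal (fun pq : Fin n × Fin n => μ pq.1 ^ (pq.2 : ℕ)) := by
      ext w pq
      rw [Matrix.mul_diagonal]
      simp only [Matrix.of_apply, hA₀, hB₀, Matrix.diagonal_pow, Matrix.diagonal_mul,
        Matrix.mul_diagonal, Matrix.kroneckerMap_apply, Matrix.transpose_apply,
        Matrix.vandermonde_apply, Pi.pow_apply]
      ring
    rw [hfac, Matrix.det_mul, Matrix.det_kronecker, Matrix.det_transpose,
      Matrix.det_diagonal]
    refine mul_ne_zero (mul_ne_zero (pow_ne_zero _ hvdm) (pow_ne_zero _ hvdm)) ?_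
    exact Finset.prod_ne_zero_iff.mpr fun pq _ => pow_ne_zero _ (hμ0 pq.1)
  refine ⟨N.det, ?_, ?_, hwit⟩
  · intro h0
    obtain ⟨A, B, h⟩ := hwit
    exact h (by rw [h0, map_zero])
  · intro A B hne W hWA hWB
    rw [heval] at hne
    set A' : Matrix (Fin n) (Fin n) k := (A : Matrix (Fin n) (Fin n) k) with hA'
    set B' : Matrix (Fin n) (Fin n) k := (B : Matrix (Fin n) (Fin n) k) with hB'
    set M : Matrix (Fin n × Fin n) (Fin n × Fin n) k :=
      Matrix.of fun (w pq : Fin n × Fin n) =>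
        (A' ^ (w.1 : ℕ) * B' * A' ^ (w.2 : ℕ)) pq.1 pq.2 with hM
    by_cases hbot : W = ⊥
    · exact Or.inl hbot
    right
    apply aux_stab_all W hbot
    intro C x hx
    -- powers of `A'` stabilize `W`
    have hpow : ∀ m : ℕ, ∀ y ∈ W, (A' ^ m).mulVec y ∈ W := by
      intro m
      induction m with
      | zero => intro y hy; simpa using hy
      | succ m ih =>
        intro y hy
        rw [pow_succ, ← Matrix.mulVec_mulVec]
        exact ih _ (hWA y hy)
    have hword : ∀ w : Fin n × Fin n, ∀ y ∈ W,
        (A' ^ (w.1 : ℕ) * B' * A' ^ (w.2 : ℕ)).mulVec y ∈ W := by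
      intro w y hy
      rw [← Matrix.mulVec_mulVec, ← Matrix.mulVec_mulVec]
      exact hpow _ _ (hWB _ (hpow _ _ hy))
    -- `C` is a linear combination of words, since the words span all matrices
    set v : Fin n × Fin n → k := fun pq => C pq.1 pq.2 with hv
    have hc : Matrix.vecMul (Matrix.vecMul v M⁻¹) M = v := by
      rw [Matrix.vecMul_vecMul, Matrix.nonsing_inv_mul M (isUnit_iff_ne_zero.mpr hne),
        Matrix.vecMul_one]
    have hC : C = ∑ w : Fin n × Fin n,
        (Matrix.vecMul v M⁻¹) w • (A' ^ (w.1 : ℕ) * B' * A' ^ (w.2 : ℕ)) := by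
      ext p q
      have h1 := congrFun hc (p, q)
      simp only [Matrix.vecMul, dotProduct] at h1
      simp only [Matrix.sum_apply, Matrix.smul_apply, smul_eq_mul]
      rw [show C p q = v (p, q) from rfl, ← h1]
      rfl
    rw [hC, aux_sum_mulVec]
    refine Submodule.sum_mem W fun w _ => ?_
    rw [Matrix.smul_mulVec]
    exact Submodule.smul_mem W _ (hword w x hx)
end

section
/- Let F be a finite field of characteristic p. Then the number of elements x ∈ F such that the subfield of F generated by x over the prime field F_p is a proper subfield of F is strictly less than 2·√|F|, where √|F| denotes the positive real square root of the cardinality of F. -/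
open Polynomial Finset

/-- Let `F` be a finite field of characteristic `p`. Then the number of `x ∈ F`
generating (over the prime field) a proper subfield of `F` is strictly less than
`2 · √|F|`. -/
theorem stmt_9 {F : Type*} [Field F] [Fintype F] (p : ℕ) [CharP F p] :
    ({x : F | Subfield.closure {x} ≠ ⊤}.ncard : ℝ) <
      2 * Real.sqrt (Fintype.card F) := by
  classical
  obtain ⟨n, hp, hcard⟩ := FiniteField.card F p
  have hp2 : 2 ≤ p := hp.two_le
  set m : ℕ := (n : ℕ) / 2 with hm
  -- Step A : each bad x satisfies x ^ p ^ d = x for some d ∈ Icc 1 m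
  have stepA : ∀ x : F, Subfield.closure {x} ≠ ⊤ →
      ∃ d ∈ Finset.Icc 1 m, x ^ p ^ d = x := by
    intro x hx
    set K := Subfield.closure ({x} : Set F) with hK
    haveI : Fintype K := Fintype.ofFinite K
    haveI : CharP K p := Subfield.charP K p
    obtain ⟨d, -, hdK⟩ := FiniteField.card K p
    have hxK : x ∈ K := Subfield.subset_closure rfl
    have hpow : x ^ p ^ (d : ℕ) = x := by
      have := FiniteField.pow_card (⟨x, hxK⟩ : K)
      rw [hdK] at this
      simpa using congrArg Subtype.val this
    refine ⟨d, Finset.mem_Icc.2 ⟨d.one_le, ?_⟩, hpow⟩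
    -- show d ≤ m
    have hfin : Fintype.card F = Fintype.card K ^ Module.finrank K F :=
      Module.card_eq_pow_finrank
    set r := Module.finrank K F with hr
    have hr0 : r ≠ 0 := by
      intro h
      rw [h, pow_zero] at hfin
      have := Fintype.one_lt_card (α := F)
      omega
    have hr1 : r ≠ 1 := by
      intro h
      rw [h, pow_one] at hfin
      have hbij : Function.Bijective (K.subtype) :=
        (Fintype.bijective_iff_injective_and_card _).2 ⟨K.subtype.injective, hfin.symm⟩
      apply hx
      rw [eq_top_iff]
      intro y _
      obtain ⟨z, hz⟩ := hbij.2 y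
      rw [← hz]; exact z.2
    have hr2 : 2 ≤ r := by omega
    have hpow2 : p ^ (n : ℕ) = p ^ ((d : ℕ) * r) := by
      rw [← hcard, hfin, hdK, ← pow_mul]
    have hn : (n : ℕ) = (d : ℕ) * r := Nat.pow_right_injective hp2 hpow2
    have : 2 * (d : ℕ) ≤ (n : ℕ) := by
      calc 2 * (d : ℕ) ≤ (d : ℕ) * r := by nlinarith
        _ = (n : ℕ) := hn.symm
    omega
  -- Step B : count
  set S : Finset F := Finset.univ.filter (fun x => Subfield.closure ({x} : Set F) ≠ ⊤) with hS
  have hncard : ({x : F | Subfield.closure {x} ≠ ⊤}.ncard : ℝ) = (S.card : ℝ) := by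
    congr 1
    rw [hS]
    rw [Set.ncard_eq_toFinset_card']
    congr 1
    ext x
    simp [Set.mem_toFinset]
  have hsub : S ⊆ (Finset.Icc 1 m).biUnion
      (fun d => Finset.univ.filter fun x : F => x ^ p ^ d = x) := by
    intro x hx
    rw [hS, Finset.mem_filter] at hx
    obtain ⟨d, hd, hpow⟩ := stepA x hx.2
    exact Finset.mem_biUnion.2 ⟨d, hd, Finset.mem_filter.2 ⟨Finset.mem_univ _, hpow⟩⟩
  have hroots : ∀ d ∈ Finset.Icc 1 m,
      (Finset.univ.filter fun x : F => x ^ p ^ d = x).card ≤ p ^ d := by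
    intro d hd
    have hpd : 2 ≤ p ^ d := by
      calc 2 = 2 ^ 1 := rfl
        _ ≤ p ^ d := Nat.pow_le_pow_left hp2 1 |>.trans
            (Nat.pow_le_pow_right (by omega) (Finset.mem_Icc.1 hd).1)
    set f : F[X] := X ^ (p ^ d) - X with hf
    have hdeg : f.natDegree = p ^ d := by
      rw [hf]
      rw [Polynomial.natDegree_sub_eq_left_of_natDegree_lt
        (by simp [Polynomial.natDegree_X_pow]; omega)]
      simp [Polynomial.natDegree_X_pow]
    have hf0 : f ≠ 0 := by
      intro h
      rw [h] at hdeg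
      simp at hdeg
      omega
    calc (Finset.univ.filter fun x : F => x ^ p ^ d = x).card
        ≤ f.roots.toFinset.card := by
          apply Finset.card_le_card
          intro x hx
          rw [Finset.mem_filter] at hx
          rw [Multiset.mem_toFinset, Polynomial.mem_roots hf0]
          simp [hf, Polynomial.IsRoot, sub_eq_zero, hx.2]
      _ ≤ Multiset.card f.roots := f.roots.toFinset_card_le
      _ ≤ f.natDegree := f.card_roots'
      _ = p ^ d := hdeg
  have hcount : S.card ≤ ∑ d ∈ Finset.Icc 1 m, p ^ d :=
    (Finset.card_le_card hsub).trans
      ((Finset.card_biUnion_le).trans (Finset.sum_le_sum hroots))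
  -- Step C : sum bound
  have hsum : ∑ d ∈ Finset.Icc 1 m, p ^ d ≤ 2 * p ^ m - 1 := by
    induction m with
    | zero => simp
    | succ k ih =>
      rw [Finset.sum_Icc_succ_top (by omega)]
      have hpk : 1 ≤ p ^ k := Nat.one_le_pow _ _ (by omega)
      have : p ^ (k+1) = p * p ^ k := by ring
      have h2 : 2 * p ^ k ≤ p ^ (k + 1) := by
        rw [pow_succ]; nlinarith
      omega
  -- final real arithmetic
  have hq1 : (1 : ℕ) ≤ p ^ m := Nat.one_le_pow _ _ (by omega)
  have hsqrt : (p ^ m : ℝ) ≤ Real.sqrt (Fintype.card F) := by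
    rw [show ((p:ℝ) ^ m) = Real.sqrt ((p ^ m : ℝ)^2) by
      rw [Real.sqrt_sq (by positivity)]]
    apply Real.sqrt_le_sqrt
    rw [← pow_mul]
    rw [hcard]
    push_cast
    apply pow_le_pow_right₀ (by norm_num; omega)
    omega
  have : (S.card : ℝ) < 2 * Real.sqrt (Fintype.card F) := by
    calc (S.card : ℝ) ≤ ((2 * p ^ m - 1 : ℕ) : ℝ) := by
          exact_mod_cast hcount.trans hsum
      _ < 2 * (p ^ m : ℝ) := by
          push_cast [Nat.cast_sub (by omega : 1 ≤ 2 * p ^ m)]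
          norm_num
      _ ≤ 2 * Real.sqrt (Fintype.card F) := by linarith
  rw [hncard]
  exact this
end
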